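/- When B = ℂ^N with the uniform δ-form (δ² = N), the quantum graph 𝒢_k = (B_k, ψ_k, 𝒜_k) is isomorphic to the classical rooted N-regular tree of depth k: identifying the standard basis of (ℂ^N)^{⊗p} with tuples (i₁,…,i_p) ∈ {1,…,N}^p, the adjacency operator 𝒜_k − Id connects each vertex (i₁,…,i_p) with p < k to precisely its N children (i₁,…,i_p,i), i = 1,…,N, and the root (empty tuple) to the vertices (i). -/

import Mathlib

open scoped TensorProduct

/-- Bundled ℂ-algebra, used to define iterated tensor powers. -/
structure Pack where
  car : Type
  ring : Ring car
  alg : Algebra ℂ car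

/-- The iterated tensor powers of `B` (with `B^{⊗0} = ℂ`), bundled with their
algebra structure. -/
noncomputable def packPow (B : Type) [Ring B] [Algebra ℂ B] : ℕ → Pack
  | 0 => ⟨ℂ, inferInstance, inferInstance⟩
  | n + 1 =>
    let P := packPow B n
    letI := P.ring
    letI := P.alg
    ⟨P.car ⊗[ℂ] B, inferInstance, inferInstance⟩

/-- `B^{⊗n}`. -/
noncomputable abbrev Bpow (B : Type) [Ring B] [Algebra ℂ B] (n : ℕ) : Type :=
  (packPow B n).car

noncomputable instance (B : Type) [Ring B] [Algebra ℂ B] (n : ℕ) :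
    Ring (Bpow B n) := (packPow B n).ring

noncomputable instance (B : Type) [Ring B] [Algebra ℂ B] (n : ℕ) :
    Algebra ℂ (Bpow B n) := (packPow B n).alg

variable (B : Type) [Ring B] [Algebra ℂ B]

/-- `ψ^{⊗n} : B^{⊗n} → ℂ`. -/
noncomputable def psiPow (ψ : B →ₗ[ℂ] ℂ) : (n : ℕ) → Bpow B n →ₗ[ℂ] ℂ
  | 0 => LinearMap.id
  | n + 1 =>
    (TensorProduct.lid ℂ ℂ).toLinearMap ∘ₗ TensorProduct.map (psiPow ψ n) ψ

/-- The map `A_n : B^{⊗n} → B^{⊗(n+1)}`, `x ↦ x ⊗ 1`. -/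
noncomputable def tensOne (n : ℕ) : Bpow B n →ₗ[ℂ] Bpow B (n + 1) :=
  (TensorProduct.mk ℂ (Bpow B n) B).flip 1

/-- `B_k = ⊕_{i=0}^{k} B^{⊗i}`. -/
abbrev Bk (k : ℕ) : Type := ∀ i : Fin (k + 1), Bpow B (i : ℕ)

/-- The adjacency operator `𝒜_k = Id + Σ_{i=0}^{k-1} A_i` of the rooted
`(B,ψ)`-regular quantum tree of depth `k`. -/
noncomputable def Ak (k : ℕ) : Bk B k →ₗ[ℂ] Bk B k :=
  LinearMap.id + ∑ i : Fin k,
    (LinearMap.single ℂ (fun j : Fin (k + 1) => Bpow B (j : ℕ)) i.succ)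
      ∘ₗ (tensOne B (i : ℕ))
      ∘ₗ (LinearMap.proj i.castSucc)

/-- `δ_k = Σ_{i=0}^k δ^i`. -/
def delk (δ : ℝ) (k : ℕ) : ℝ := ∑ i ∈ Finset.range (k + 1), δ ^ i

/-- The state `ψ_k = δ_k⁻¹ Σ_{i=0}^k δ^i ψ^{⊗i}` on `B_k`. -/
noncomputable def psiK (ψ : B →ₗ[ℂ] ℂ) (δ : ℝ) (k : ℕ) : Bk B k →ₗ[ℂ] ℂ :=
  ((delk δ k : ℂ)⁻¹) • ∑ i : Fin (k + 1),
    ((δ : ℂ) ^ (i : ℕ)) • ((psiPow B ψ (i : ℕ)) ∘ₗ (LinearMap.proj i))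

/-- Positivity in a `*`-ring: sums of elements `y* y`. -/
def IsPosElem {A : Type} [Ring A] [StarRing A] (x : A) : Prop :=
  ∃ L : List A, x = (L.map fun y => star y * y).sum

/-- Positivity for matrices over a `*`-ring: sums of elements `Yᴴ Y`. -/
def MatPos {A : Type} [Ring A] [StarRing A] {n : ℕ}
    (M : Matrix (Fin n) (Fin n) A) : Prop :=
  ∃ L : List (Matrix (Fin n) (Fin n) A), M = (L.map fun Y => Y.conjTranspose * Y).sum

/-- Complete positivity of a linear map on a `*`-algebra. -/
def IsCP {A : Type} [Ring A] [StarRing A] [Module ℂ A] (φ : A →ₗ[ℂ] A) : Prop :=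
  ∀ n : ℕ, ∀ M : Matrix (Fin n) (Fin n) A, MatPos M → MatPos (M.map φ)

open scoped Classical

/-- The standard basis vector of `(ℂ^N)^{⊗p}` labelled by a tuple. -/
noncomputable def bas (N : ℕ) : (p : ℕ) → (Fin p → Fin N) → Bpow (Fin N → ℂ) p
  | 0, _ => (1 : Bpow (Fin N → ℂ) 0)
  | p + 1, t => show Bpow (Fin N → ℂ) (p + 1) from
      (bas N p (fun m => t m.castSucc)) ⊗ₜ[ℂ] (Pi.single (t (Fin.last p)) (1 : ℂ))

/-- Vertices of the rooted `N`-regular tree of depth `k`: tuples of length at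
most `k` with entries in `{1,…,N}`. -/
abbrev Vtx (N k : ℕ) := Σ p : Fin (k + 1), (Fin (p : ℕ) → Fin N)

/-- `v` is the parent of `w` (equivalently, `w` is a child of `v`, i.e. a
one-letter extension of the tuple `v`). -/
def EdgeRel {N k : ℕ} (v w : Vtx N k) : Prop :=
  ∃ h : (v.1 : ℕ) + 1 = (w.1 : ℕ),
    ∀ m : Fin (v.1 : ℕ), v.2 m = w.2 (Fin.castLE (by omega) m)

/-- The uniform state on `ℂ^N` (the `δ`-form with `δ² = N`). -/
noncomputable def unifState (N : ℕ) : (Fin N → ℂ) →ₗ[ℂ] ℂ :=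
  ((N : ℂ)⁻¹) • ∑ i : Fin N, LinearMap.proj i

/-! ### Auxiliary constructions -/

def comapAlg {ι κ : Type} (σ : κ → ι) : (ι → ℂ) →ₐ[ℂ] (κ → ℂ) where
  toFun f := f ∘ σ
  map_one' := rfl
  map_mul' _ _ := rfl
  map_zero' := rfl
  map_add' _ _ := rfl
  commutes' _ := rfl

noncomputable def tupEv (N : ℕ) : (p : ℕ) → (Bpow (Fin N → ℂ) p) →ₐ[ℂ] ((Fin p → Fin N) → ℂ)
  | 0 => Algebra.ofId ℂ _
  | p + 1 =>
    show (Bpow (Fin N → ℂ) p ⊗[ℂ] (Fin N → ℂ)) →ₐ[ℂ] _ from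
    Algebra.TensorProduct.lift
      ((comapAlg (fun (t : Fin (p+1) → Fin N) (m : Fin p) => t m.castSucc)).comp (tupEv N p))
      (comapAlg (fun (t : Fin (p+1) → Fin N) => t (Fin.last p)))
      (fun _ _ => Commute.all _ _)

theorem fin_fun_eq_iff {α : Type} {p : ℕ} (s t : Fin (p+1) → α) :
    s = t ↔ (fun (m : Fin p) => s m.castSucc) = (fun m => t m.castSucc)
      ∧ s (Fin.last p) = t (Fin.last p) := by
  constructor
  · rintro rfl; exact ⟨rfl, rfl⟩
  · rintro ⟨h1, h2⟩
    funext m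
    refine Fin.lastCases h2 (fun i => ?_) m
    exact congrFun h1 i

theorem tupEv_bas (N : ℕ) (p : ℕ) (t : Fin p → Fin N) :
    tupEv N p (bas N p t) = fun s => if s = t then 1 else 0 := by
  induction p with
  | zero =>
    funext s
    simp [bas, tupEv, Subsingleton.elim s t, Algebra.ofId_apply]
    rfl
  | succ p ih =>
    funext s
    have key : tupEv N (p+1) (bas N (p+1) t) s
        = tupEv N p (bas N p (fun m => t m.castSucc)) (fun m => s m.castSucc)
          * (Pi.single (t (Fin.last p)) (1:ℂ) : Fin N → ℂ) (s (Fin.last p)) := by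
      simp only [tupEv, bas, Algebra.TensorProduct.lift_tmul]
      rfl
    rw [key, ih]
    by_cases h1 : (fun (m : Fin p) => s m.castSucc) = (fun m => t m.castSucc) <;>
      by_cases h2 : s (Fin.last p) = t (Fin.last p) <;>
      simp [h1, h2, Pi.single_apply, fin_fun_eq_iff s t]

theorem tupEv_surj (N p : ℕ) : Function.Surjective (tupEv N p) := by
  intro g
  refine ⟨∑ t : Fin p → Fin N, g t • bas N p t, ?_⟩
  rw [map_sum]
  funext s
  simp only [map_smul, tupEv_bas]
  simp [Finset.sum_apply, Finset.sum_ite_eq']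

theorem bpow_findim (N : ℕ) (p : ℕ) :
    ∃ _ : FiniteDimensional ℂ (Bpow (Fin N → ℂ) p),
      Module.finrank ℂ (Bpow (Fin N → ℂ) p) = N ^ p := by
  induction p with
  | zero => exact ⟨(inferInstance : FiniteDimensional ℂ ℂ), Module.finrank_self ℂ⟩
  | succ p ih =>
    obtain ⟨inst, hr⟩ := ih
    have h1 : FiniteDimensional ℂ (Bpow (Fin N → ℂ) p ⊗[ℂ] (Fin N → ℂ)) :=
      Module.Finite.tensorProduct ℂ _ _
    refine ⟨h1, ?_⟩
    show Module.finrank ℂ (Bpow (Fin N → ℂ) p ⊗[ℂ] (Fin N → ℂ)) = N ^ (p+1)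
    rw [Module.finrank_tensorProduct, hr, Module.finrank_pi]
    simp [pow_succ]

theorem tupEv_inj (N p : ℕ) : Function.Injective (tupEv N p) := by
  obtain ⟨inst, hr⟩ := bpow_findim N p
  have hfr : Module.finrank ℂ (Bpow (Fin N → ℂ) p)
      = Module.finrank ℂ ((Fin p → Fin N) → ℂ) := by
    rw [hr, Module.finrank_pi]
    simp
  exact (LinearMap.injective_iff_surjective_of_finrank_eq_finrank
    (f := (tupEv N p).toLinearMap) hfr).mpr (tupEv_surj N p)

noncomputable def tupEquiv (N p : ℕ) : Bpow (Fin N → ℂ) p ≃ₐ[ℂ] ((Fin p → Fin N) → ℂ) :=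
  AlgEquiv.ofBijective (tupEv N p) ⟨tupEv_inj N p, tupEv_surj N p⟩

theorem tupEv_tmul (N p : ℕ) (y : Bpow (Fin N → ℂ) p) (v : Fin N → ℂ) (s : Fin (p+1) → Fin N) :
    tupEv N (p+1) (y ⊗ₜ[ℂ] v) s
      = tupEv N p y (fun m => s m.castSucc) * v (s (Fin.last p)) := by
  simp only [tupEv, Algebra.TensorProduct.lift_tmul]
  rfl

noncomputable def snocE (N p : ℕ) : (Fin p → Fin N) × Fin N ≃ (Fin (p+1) → Fin N) where
  toFun ga := Fin.snoc ga.1 ga.2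
  invFun t := (fun m => t m.castSucc, t (Fin.last p))
  left_inv ga := by
    ext m
    · simp [Fin.snoc_castSucc]
    · simp [Fin.snoc_last]
  right_inv t := by
    funext m
    refine Fin.lastCases ?_ (fun i => ?_) m
    · simp [Fin.snoc_last]
    · simp [Fin.snoc_castSucc]

theorem psiPow_eq (N p : ℕ) (x : Bpow (Fin N → ℂ) p) :
    psiPow (Fin N → ℂ) (unifState N) p x
      = ((N:ℂ)⁻¹)^p * ∑ s : Fin p → Fin N, tupEv N p x s := by
  induction p with
  | zero =>
    simp [psiPow, tupEv, Algebra.ofId_apply]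
    rfl
  | succ p ih =>
    have e : ∀ z : Bpow (Fin N → ℂ) p ⊗[ℂ] (Fin N → ℂ),
        psiPow (Fin N → ℂ) (unifState N) (p+1) z
          = ((N:ℂ)⁻¹)^(p+1) * ∑ s : Fin (p+1) → Fin N, tupEv N (p+1) z s := by
      intro z
      induction z using TensorProduct.induction_on with
      | zero =>
        show psiPow (Fin N → ℂ) (unifState N) (p+1) (0 : Bpow (Fin N → ℂ) (p+1))
          = ((N:ℂ)⁻¹)^(p+1) * ∑ s : Fin (p+1) → Fin N, tupEv N (p+1) (0 : Bpow (Fin N → ℂ) (p+1)) s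
        rw [map_zero, map_zero]
        simp
      | add a b ha hb =>
        rw [show psiPow (Fin N → ℂ) (unifState N) (p+1) (a + b)
            = psiPow (Fin N → ℂ) (unifState N) (p+1) a
              + psiPow (Fin N → ℂ) (unifState N) (p+1) b from map_add _ _ _]
        rw [ha, hb]
        rw [show tupEv N (p+1) (a + b) = tupEv N (p+1) a + tupEv N (p+1) b from map_add _ _ _]
        simp [Finset.sum_add_distrib]
        ring
      | tmul y v =>
        have lhs : psiPow (Fin N → ℂ) (unifState N) (p+1) (y ⊗ₜ[ℂ] v)
            = psiPow (Fin N → ℂ) (unifState N) p y * unifState N v := by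
          have h : psiPow (Fin N → ℂ) (unifState N) (p+1) (y ⊗ₜ[ℂ] v)
              = (TensorProduct.lid ℂ ℂ) ((TensorProduct.map
                  (psiPow (Fin N → ℂ) (unifState N) p) (unifState N)) (y ⊗ₜ[ℂ] v)) := rfl
          rw [h, TensorProduct.map_tmul, TensorProduct.lid_tmul, smul_eq_mul]
        rw [lhs, ih]
        have rhs : ∑ s : Fin (p+1) → Fin N, tupEv N (p+1) (y ⊗ₜ[ℂ] v) s
            = (∑ g : Fin p → Fin N, tupEv N p y g) * (∑ a : Fin N, v a) := by
          rw [← Fintype.sum_equiv (snocE N p)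
            (fun ga => tupEv N p y ga.1 * v ga.2)
            (fun s => tupEv N (p+1) (y ⊗ₜ[ℂ] v) s) ?_]
          · rw [Fintype.sum_prod_type, Finset.sum_mul_sum]
          · intro ga
            show (tupEv N p) y ga.1 * v ga.2 = tupEv N (p+1) (y ⊗ₜ[ℂ] v) ((snocE N p) ga)
            rw [tupEv_tmul]
            have h1 : (fun m => (snocE N p) ga m.castSucc) = ga.1 := by
              funext m; simp [snocE, Fin.snoc_castSucc]
            have h2 : (snocE N p) ga (Fin.last p) = ga.2 := by
              simp [snocE, Fin.snoc_last]
            rw [h1, h2]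
        rw [rhs]
        have hu : unifState N v = (N:ℂ)⁻¹ * ∑ a : Fin N, v a := by
          simp [unifState]
        rw [hu, pow_succ]
        ring
    exact e x

noncomputable def sigAlgEquiv (N k : ℕ) :
    (∀ j : Fin (k+1), ((Fin (j:ℕ) → Fin N) → ℂ)) ≃ₐ[ℂ] (Vtx N k → ℂ) where
  toFun f v := f v.1 v.2
  invFun g j s := g ⟨j, s⟩
  left_inv _ := rfl
  right_inv _ := rfl
  map_mul' _ _ := rfl
  map_add' _ _ := rfl
  commutes' _ := rfl

noncomputable def Phi (N k : ℕ) : Bk (Fin N → ℂ) k ≃ₐ[ℂ] (Vtx N k → ℂ) :=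
  (AlgEquiv.piCongrRight (fun j : Fin (k+1) => tupEquiv N (j:ℕ))).trans (sigAlgEquiv N k)

theorem Phi_apply (N k : ℕ) (x : Bk (Fin N → ℂ) k) (v : Vtx N k) :
    Phi N k x v = tupEv N (v.1 : ℕ) (x v.1) v.2 := rfl

theorem tupEv_tensOne (N p : ℕ) (x : Bpow (Fin N → ℂ) p) (s : Fin (p+1) → Fin N) :
    tupEv N (p+1) (tensOne (Fin N → ℂ) p x) s
      = tupEv N p x (fun m => s m.castSucc) := by
  rw [show tensOne (Fin N → ℂ) p x = x ⊗ₜ[ℂ] (1 : Fin N → ℂ) from rfl, tupEv_tmul]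
  simp

theorem edge_iff (N k : ℕ) (i₀ : Fin k) (s : Fin ((i₀.succ : Fin (k+1)) : ℕ) → Fin N)
    (v : Vtx N k) :
    EdgeRel v ⟨i₀.succ, s⟩ ↔ v = ⟨i₀.castSucc, fun m => s m.castSucc⟩ := by
  constructor
  · rintro ⟨h, hm⟩
    obtain ⟨p, u⟩ := v
    have hp : p = i₀.castSucc := by
      apply Fin.ext
      simp only [Fin.val_succ] at h
      simp only [Fin.coe_castSucc]
      omega
    subst hp
    have hu : u = fun m => s m.castSucc := by
      funext m
      exact (hm m).trans (congrArg s (Fin.ext rfl))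
    rw [hu]
  · rintro rfl
    refine ⟨rfl, fun m => ?_⟩
    congr 1

/-- STATEMENT 19: for `B = ℂ^N` with its uniform `δ`-form (`δ = √N`), the
quantum graph `𝒢_k = (B_k, ψ_k, 𝒜_k)` is the classical rooted `N`-regular tree
of depth `k`: under the canonical algebra isomorphism sending the standard
basis of `(ℂ^N)^{⊗p}` to indicator functions of tuples, the state `ψ_k`
becomes the corresponding weighted measure and `𝒜_k − Id` connects each vertex
to precisely its `N` children (and the root to the one-letter tuples). -/
theorem stmt19 (N : ℕ) (hN : 0 < N) (k : ℕ) :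
    ∃ Φ : Bk (Fin N → ℂ) k ≃ₐ[ℂ] (Vtx N k → ℂ),
      (∀ (j : Fin (k + 1)) (t : Fin (j : ℕ) → Fin N),
        Φ (Pi.single j (bas N (j : ℕ) t))
          = fun v : Vtx N k => if v = ⟨j, t⟩ then (1 : ℂ) else 0) ∧
      (∀ x : Bk (Fin N → ℂ) k,
        psiK (Fin N → ℂ) (unifState N) (Real.sqrt N) k x
          = ∑ v : Vtx N k,
              ((delk (Real.sqrt N) k : ℂ)⁻¹ * ((Real.sqrt N : ℂ)) ^ (v.1 : ℕ)
                * ((N : ℂ) ^ (v.1 : ℕ))⁻¹) * Φ x v) ∧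
      (∀ (f : Bk (Fin N → ℂ) k) (w : Vtx N k),
        Φ (Ak (Fin N → ℂ) k f) w
          = Φ f w + ∑ v : Vtx N k,
              (if EdgeRel v w then (1 : ℂ) else 0) * Φ f v) := by
  refine ⟨Phi N k, ?_, ?_, ?_⟩
  · -- basis vectors go to indicator functions
    intro j t
    funext v
    obtain ⟨i, s⟩ := v
    show tupEv N (i:ℕ)
      (Pi.single (M := fun j : Fin (k+1) => Bpow (Fin N → ℂ) (j:ℕ)) j (bas N (j:ℕ) t) i) s
      = if (⟨i, s⟩ : Vtx N k) = ⟨j, t⟩ then (1:ℂ) else 0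
    by_cases hij : i = j
    · subst hij
      rw [Pi.single_eq_same, tupEv_bas]
      by_cases hst : s = t
      · subst hst; simp
      · have hne : (⟨i, s⟩ : Vtx N k) ≠ ⟨i, t⟩ := by
          intro h
          exact hst (eq_of_heq (Sigma.mk.inj_iff.mp h).2)
        simp [hst, hne]
    · rw [Pi.single_eq_of_ne hij, map_zero]
      have hne : (⟨i, s⟩ : Vtx N k) ≠ ⟨j, t⟩ := by
        intro h
        exact hij (congrArg Sigma.fst h)
      simp [hne]
  · -- the state becomes the weighted counting measure
    intro x
    have L : psiK (Fin N → ℂ) (unifState N) (Real.sqrt N) k x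
        = ∑ i : Fin (k+1), ((delk (Real.sqrt N) k : ℂ))⁻¹ * ((Real.sqrt N : ℂ))^(i:ℕ)
            * psiPow (Fin N → ℂ) (unifState N) (i:ℕ) (x i) := by
      simp [psiK, Finset.mul_sum, mul_assoc]
    rw [L]
    conv_rhs => rw [← (Finset.univ_sigma_univ (ι := Fin (k+1))
      (κ := fun j : Fin (k+1) => Fin (j:ℕ) → Fin N))]
    rw [Finset.sum_sigma]
    refine Finset.sum_congr rfl (fun i _ => ?_)
    rw [psiPow_eq, Finset.mul_sum]
    rw [Finset.mul_sum]
    refine Finset.sum_congr rfl (fun t _ => ?_)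
    dsimp only
    rw [Phi_apply, inv_pow]
    ring
  · -- the adjacency operator
    intro f w
    have hAk : Ak (Fin N → ℂ) k f = f + ∑ i : Fin k,
        Pi.single i.succ (tensOne (Fin N → ℂ) (i:ℕ) (f i.castSucc)) := by
      simp only [Ak, LinearMap.add_apply, LinearMap.id_apply, LinearMap.sum_apply]
      congr 1
    rw [hAk, map_add, map_sum, Pi.add_apply, Finset.sum_apply]
    congr 1
    obtain ⟨q, s⟩ := w
    revert s
    refine Fin.cases ?_ ?_ q
    · -- root: no parents
      intro s
      have h0 : ∀ i : Fin k, Phi N k (Pi.single i.succ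
          (tensOne (Fin N → ℂ) (i:ℕ) (f i.castSucc))) (⟨0, s⟩ : Vtx N k) = 0 := by
        intro i
        show tupEv N ((0 : Fin (k+1)):ℕ)
          (Pi.single (M := fun j : Fin (k+1) => Bpow (Fin N → ℂ) (j:ℕ)) i.succ
            (tensOne (Fin N → ℂ) (i:ℕ) (f i.castSucc)) (0 : Fin (k+1))) s = 0
        rw [Pi.single_eq_of_ne (Fin.succ_ne_zero i).symm, map_zero]
        rfl
      have h1 : ∀ v : Vtx N k, ¬ EdgeRel v (⟨0, s⟩ : Vtx N k) := by
        rintro v ⟨h, -⟩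
        simp at h
      simp [h0, h1]
    · -- non-root vertex ⟨i₀.succ, s⟩
      intro i₀ s
      have hz : ∀ i : Fin k, i ∈ Finset.univ → i ≠ i₀ →
          Phi N k (Pi.single i.succ
            (tensOne (Fin N → ℂ) (i:ℕ) (f i.castSucc))) (⟨i₀.succ, s⟩ : Vtx N k) = 0 := by
        intro i _ hne
        show tupEv N ((i₀.succ : Fin (k+1)):ℕ)
          (Pi.single (M := fun j : Fin (k+1) => Bpow (Fin N → ℂ) (j:ℕ)) i.succ
            (tensOne (Fin N → ℂ) (i:ℕ) (f i.castSucc)) i₀.succ) s = 0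
        rw [Pi.single_eq_of_ne (fun h => hne (Fin.succ_injective _ h).symm), map_zero]
        rfl
      rw [Finset.sum_eq_single i₀ hz (by simp)]
      have lhs1 : Phi N k (Pi.single i₀.succ
          (tensOne (Fin N → ℂ) (i₀:ℕ) (f i₀.castSucc))) (⟨i₀.succ, s⟩ : Vtx N k)
          = tupEv N ((i₀:ℕ)+1) (tensOne (Fin N → ℂ) (i₀:ℕ) (f i₀.castSucc)) s := by
        show tupEv N ((i₀.succ : Fin (k+1)):ℕ)
          (Pi.single (M := fun j : Fin (k+1) => Bpow (Fin N → ℂ) (j:ℕ)) i₀.succ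
            (tensOne (Fin N → ℂ) (i₀:ℕ) (f i₀.castSucc)) i₀.succ) s = _
        rw [Pi.single_eq_same]
        rfl
      rw [lhs1, tupEv_tensOne]
      have rhs1 : ∑ v : Vtx N k,
          (if EdgeRel v (⟨i₀.succ, s⟩ : Vtx N k) then (1:ℂ) else 0) * Phi N k f v
          = Phi N k f ⟨i₀.castSucc, fun m => s m.castSucc⟩ := by
        rw [show (fun v : Vtx N k =>
            (if EdgeRel v (⟨i₀.succ, s⟩ : Vtx N k) then (1:ℂ) else 0) * Phi N k f v)
          = fun v => (if v = (⟨i₀.castSucc, fun m => s m.castSucc⟩ : Vtx N k)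
              then (1:ℂ) else 0) * Phi N k f v from
          funext fun v => by simp only [edge_iff N k i₀ s]]
        simp [Finset.sum_ite_eq']
      rw [rhs1, Phi_apply]
      rfl
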